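/- Let A be a ℂ-vector space equipped with two associative bilinear products: a commutative product · and a (possibly noncommutative) product ⋆, having a common two-sided unit 1. Let τ : A → ℂ be linear with τ(a⋆b) = τ(b⋆a) for all a, b ∈ A. Set θ(a,b) := a⋆b − a·b and, for k ∈ ℕ, define the (2k+1)-linear functional φ_{2k}(a_0,…,a_{2k}) := τ(a_0 ⋆ θ(a_1,a_2) ⋆ θ(a_3,a_4) ⋆ ⋯ ⋆ θ(a_{2k−1},a_{2k})) (with φ_0(a_0) = τ(a_0)). Then b φ_{2k} + (1/(k+1)) B φ_{2k+2} = 0, where b is the Hochschild coboundary with respect to the commutative product ·, and B = 𝒜∘B_0 is Connes' B-operator. -/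

import Mathlib

/-- `(a_0, …, a_j ⬝ a_{j+1}, …, a_{m+1})`. -/
def hochMul {A : Type*} (mul : A → A → A) (m : ℕ) (j : Fin (m + 1)) (a : Fin (m + 2) → A) :
    Fin (m + 1) → A := fun i =>
  if (i : ℕ) < (j : ℕ) then a i.castSucc
  else if (i : ℕ) = (j : ℕ) then mul (a i.castSucc) (a i.succ)
  else a i.succ

/-- `φ_{2k}(a_0,…,a_{2k}) = τ(a_0 ⋆ θ(a_1,a_2) ⋆ ⋯ ⋆ θ(a_{2k−1},a_{2k}))`
where `θ(a,b) = a ⋆ b − a · b`. -/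
noncomputable def phiCFS {A : Type*} [AddCommGroup A] (τ : A → ℂ) (star cdot : A → A → A)
    (k : ℕ) (a : Fin (2 * k + 1) → A) : ℂ :=
  τ ((List.ofFn fun i : Fin k =>
        star (a ⟨2 * (i : ℕ) + 1, by have := i.isLt; omega⟩)
             (a ⟨2 * (i : ℕ) + 2, by have := i.isLt; omega⟩)
        - cdot (a ⟨2 * (i : ℕ) + 1, by have := i.isLt; omega⟩)
               (a ⟨2 * (i : ℕ) + 2, by have := i.isLt; omega⟩)).foldl star (a 0))

namespace CFSAux

variable {A : Type*}

def foldProd (mul : A → A → A) (x : A) (g : ℕ → A) : ℕ → A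
  | 0 => x
  | n+1 => mul (foldProd mul x g n) (g n)

theorem foldProd_congr (mul : A → A → A) (x : A) {g g' : ℕ → A} {n : ℕ}
    (h : ∀ i < n, g i = g' i) : foldProd mul x g n = foldProd mul x g' n := by
  induction n with
  | zero => rfl
  | succ n ih =>
      show mul (foldProd mul x g n) (g n) = mul (foldProd mul x g' n) (g' n)
      rw [ih fun i hi => h i (by omega), h n (by omega)]

theorem foldProd_add (mul : A → A → A) (x : A) (g : ℕ → A) (m n : ℕ) :
    foldProd mul x g (m + n) = foldProd mul (foldProd mul x g m) (fun i => g (m+i)) n := by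
  induction n with
  | zero => rfl
  | succ n ih =>
      show mul (foldProd mul x g (m+n)) (g (m+n)) = _
      rw [ih]; rfl

theorem foldProd_shift (mul : A → A → A) (x : A) (g : ℕ → A) (n : ℕ) :
    foldProd mul x g (1 + n) = foldProd mul (mul x (g 0)) (fun i => g (1+i)) n :=
  foldProd_add mul x g 1 n

theorem foldl_ofFn (mul : A → A → A) (x : A) : ∀ {n : ℕ} (f : Fin n → A) (g : ℕ → A),
    (∀ i : Fin n, f i = g i) → (List.ofFn f).foldl mul x = foldProd mul x g n := by
  intro n
  induction n with
  | zero => intro f g h; simp [foldProd]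
  | succ n ih =>
      intro f g h
      rw [List.ofFn_succ', List.concat_eq_append, List.foldl_append]
      show mul ((List.ofFn fun i : Fin n => f i.castSucc).foldl mul x) (f (Fin.last n))
          = mul (foldProd mul x g n) (g n)
      rw [ih (fun i => f i.castSucc) g (fun i => by simpa using h i.castSucc),
        h (Fin.last n)]
      rfl

theorem foldProd_sub [AddCommGroup A] (mul : A → A → A)
    (hsub : ∀ x y z : A, mul (x - y) z = mul x z - mul y z) (x y : A) (g : ℕ → A) (n : ℕ) :
    foldProd mul (x - y) g n = foldProd mul x g n - foldProd mul y g n := by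
  induction n with
  | zero => rfl
  | succ n ih =>
      show mul (foldProd mul (x-y) g n) (g n)
          = mul (foldProd mul x g n) (g n) - mul (foldProd mul y g n) (g n)
      rw [ih, hsub]

theorem foldProd_pull (mul : A → A → A) (one : A)
    (hassoc : ∀ x y z : A, mul (mul x y) z = mul x (mul y z))
    (hone : ∀ x : A, mul x one = x) (x : A) (g : ℕ → A) (n : ℕ) :
    foldProd mul x g n = mul x (foldProd mul one g n) := by
  induction n with
  | zero => exact (hone x).symm
  | succ n ih =>
      show mul (foldProd mul x g n) (g n) = mul x (mul (foldProd mul one g n) (g n))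
      rw [ih, hassoc]

theorem fold_mid (mul : A → A → A) (x : A) (Θ : ℕ → A) (g : ℕ → A) (k t : ℕ) (ht : t < k)
    (X : A) (h1 : ∀ m < t, g m = Θ (2*m+1)) (h2 : g t = X)
    (h3 : ∀ m, t < m → m < k → g m = Θ (2*m+2)) :
    foldProd mul x g k
      = foldProd mul (mul (foldProd mul x (fun i => Θ (2*i+1)) t) X)
          (fun i => Θ (2*t+4+2*i)) (k-1-t) := by
  have e : k = (t+1) + (k-1-t) := by omega
  conv_lhs => rw [e]
  rw [foldProd_add]
  have e1 : foldProd mul x g (t+1) = mul (foldProd mul x (fun i => Θ (2*i+1)) t) X := by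
    show mul (foldProd mul x g t) (g t) = _
    rw [foldProd_congr mul x (fun i hi => h1 i hi), h2]
  rw [e1]
  exact foldProd_congr mul _ (fun i hi => by
    rw [h3 (t+1+i) (by omega) (by omega)]
    congr 1
    omega)

theorem foldProd_last_zero [AddCommGroup A] (mul : A → A → A) (x : A) (g : ℕ → A) (n : ℕ)
    (hz : ∀ y : A, mul y 0 = 0) (hg : g n = 0) : foldProd mul x g (n+1) = 0 := by
  show mul (foldProd mul x g n) (g n) = 0
  rw [hg, hz]

theorem sum_pair (h : ℕ → ℂ) (n : ℕ) :
    ∑ i ∈ Finset.range (2*n), h i = ∑ j ∈ Finset.range n, (h (2*j) + h (2*j+1)) := by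
  induction n with
  | zero => simp
  | succ n ih =>
      have e : 2*(n+1) = (2*n+1)+1 := by ring
      rw [e, Finset.sum_range_succ, Finset.sum_range_succ, ih, Finset.sum_range_succ]
      ring

theorem phi_eq {A : Type*} [AddCommGroup A] (τ : A → ℂ) (star cdot : A → A → A)
    (K : ℕ) (b : Fin (2*K+1) → A) (b' : ℕ → A)
    (hb : ∀ i : Fin (2*K+1), b i = b' (i:ℕ)) :
    phiCFS τ star cdot K b
      = τ (foldProd star (b' 0)
          (fun m => star (b' (2*m+1)) (b' (2*m+2)) - cdot (b' (2*m+1)) (b' (2*m+2))) K) := by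
  unfold phiCFS
  have h0 : b 0 = b' 0 := by rw [hb 0]; simp
  rw [foldl_ofFn star (b 0) _
      (fun m => star (b' (2*m+1)) (b' (2*m+2)) - cdot (b' (2*m+1)) (b' (2*m+2)))
      (fun i => by simp only [hb]), h0]

end CFSAux

theorem cfs_b_B_cocycle_identity
    {A : Type*} [AddCommGroup A] [Module ℂ A]
    (star cdot : A → A → A) (one : A)
    (hstar_add_left : ∀ x y z : A, star (x + y) z = star x z + star y z)
    (hstar_add_right : ∀ x y z : A, star x (y + z) = star x y + star x z)
    (hstar_smul_left : ∀ (c : ℂ) (x y : A), star (c • x) y = c • star x y)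
    (hstar_smul_right : ∀ (c : ℂ) (x y : A), star x (c • y) = c • star x y)
    (hcdot_add_left : ∀ x y z : A, cdot (x + y) z = cdot x z + cdot y z)
    (hcdot_add_right : ∀ x y z : A, cdot x (y + z) = cdot x y + cdot x z)
    (hcdot_smul_left : ∀ (c : ℂ) (x y : A), cdot (c • x) y = c • cdot x y)
    (hcdot_smul_right : ∀ (c : ℂ) (x y : A), cdot x (c • y) = c • cdot x y)
    (hstar_assoc : ∀ x y z : A, star (star x y) z = star x (star y z))
    (hcdot_assoc : ∀ x y z : A, cdot (cdot x y) z = cdot x (cdot y z))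
    (hcdot_comm : ∀ x y : A, cdot x y = cdot y x)
    (hstar_one_left : ∀ x : A, star one x = x)
    (hstar_one_right : ∀ x : A, star x one = x)
    (hcdot_one_left : ∀ x : A, cdot one x = x)
    (hcdot_one_right : ∀ x : A, cdot x one = x)
    (τ : A →ₗ[ℂ] ℂ)
    (hτ_trace : ∀ a b : A, τ (star a b) = τ (star b a))
    (k : ℕ) :
    ∀ a : Fin (2 * k + 2) → A,
      ((∑ j : Fin (2 * k + 1),
          (-1 : ℂ) ^ (j : ℕ) * phiCFS (⇑τ) star cdot k (hochMul cdot (2 * k) j a))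
        + (-1 : ℂ) ^ (2 * k + 1) *
            phiCFS (⇑τ) star cdot k
              (fun i => if i = 0 then cdot (a (Fin.last (2 * k + 1))) (a 0) else a i.castSucc))
      + (1 / ((k : ℂ) + 1)) *
          (∑ i : Fin (2 * k + 2), (-1 : ℂ) ^ (i : ℕ) *
            (phiCFS (⇑τ) star cdot (k + 1) (Fin.cons one (fun j : Fin (2 * k + 2) => a (i + j)))
              - phiCFS (⇑τ) star cdot (k + 1) (Fin.snoc (fun j : Fin (2 * k + 2) => a (i + j)) one))) = 0 := by
  intro a
  classical
  set aN : ℕ → A := fun n => a ⟨n % (2*k+2), Nat.mod_lt _ (by omega)⟩ with haNdef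
  set Θ : ℕ → A := fun n => star (aN n) (aN (n+1)) - cdot (aN n) (aN (n+1)) with hThdef
  have aN_eq : ∀ (n : ℕ) (h : n < 2*k+2), aN n = a ⟨n, h⟩ := by
    intro n h
    simp only [haNdef]
    congr 1
    exact Fin.ext (Nat.mod_eq_of_lt h)
  have aN_per : ∀ n, aN (n + (2*k+2)) = aN n := by
    intro n
    simp only [haNdef]
    congr 1
    exact Fin.ext (by simpa using Nat.add_mod_right n (2*k+2))
  have Th_per : ∀ n, Θ (n + (2*k+2)) = Θ n := by
    intro n
    simp only [hThdef]
    rw [show n + (2*k+2) + 1 = (n+1) + (2*k+2) by omega, aN_per, aN_per]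
  have star0r : ∀ x : A, star x 0 = 0 := fun x => by
    have h := hstar_smul_right 0 x 0
    simpa using h
  have starsubl : ∀ x y z : A, star (x - y) z = star x z - star y z := by
    intro x y z
    have h := hstar_smul_left (-1) y z
    simp only [neg_smul, one_smul] at h
    rw [sub_eq_add_neg, hstar_add_left, h, ← sub_eq_add_neg]
  have starsubr : ∀ x y z : A, star x (y - z) = star x y - star x z := by
    intro x y z
    have h := hstar_smul_right (-1) x z
    simp only [neg_smul, one_smul] at h
    rw [sub_eq_add_neg, hstar_add_right, h, ← sub_eq_add_neg]
  -- ===== Part B : the Connes boundary term =====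
  set G : ℕ → A := fun n => CFSAux.foldProd star one (fun m => Θ (n + 2*m)) (k+1) with hGdef
  have fp_pull := CFSAux.foldProd_pull star one hstar_assoc hstar_one_right
  have hGval : ∀ i : Fin (2*k+2),
      phiCFS (⇑τ) star cdot (k+1) (Fin.cons one (fun j : Fin (2*k+2) => a (i+j))) = τ (G (i:ℕ)) := by
    intro i
    have hb : ∀ idx : Fin (2*(k+1)+1),
        (Fin.cons one (fun j : Fin (2*k+2) => a (i+j)) : Fin (2*(k+1)+1) → A) idx
          = (fun n => if n = 0 then one else aN ((i:ℕ) + (n-1))) (idx : ℕ) := by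
      intro idx
      induction idx using Fin.cases with
      | zero => simp
      | succ j =>
          rw [Fin.cons_succ]
          simp only [Fin.val_succ]
          rw [if_neg (by omega : ¬ (j:ℕ)+1 = 0), show (j:ℕ)+1-1 = (j:ℕ) from rfl]
          simp only [haNdef]
          exact congrArg a (Fin.ext (Fin.val_add i j))
    rw [CFSAux.phi_eq (⇑τ) star cdot (k+1) _
      (fun n => if n = 0 then one else aN ((i:ℕ) + (n-1))) hb]
    congr 1
  have hsnoc : ∀ i : Fin (2*k+2),
      phiCFS (⇑τ) star cdot (k+1) (Fin.snoc (fun j : Fin (2*k+2) => a (i+j)) one) = 0 := by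
    intro i
    have hb : ∀ idx : Fin (2*(k+1)+1),
        (Fin.snoc (fun j : Fin (2*k+2) => a (i+j)) one : Fin (2*(k+1)+1) → A) idx
          = (fun n => if h : n < 2*k+2 then a (i + ⟨n, h⟩) else one) (idx : ℕ) := by
      intro idx
      induction idx using Fin.lastCases with
      | last =>
          rw [Fin.snoc_last]
          simp only [Fin.val_last]
          show one = if h : 2*(k+1) < 2*k+2 then a (i + ⟨2*(k+1), h⟩) else one
          rw [dif_neg (by omega)]
      | cast j =>
          rw [Fin.snoc_castSucc]
          simp only [Fin.coe_castSucc]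
          have hj : (j:ℕ) < 2*k+2 := lt_of_lt_of_le j.isLt (by omega)
          rw [dif_pos hj]
          rfl
    rw [CFSAux.phi_eq (⇑τ) star cdot (k+1) _
      (fun n => if h : n < 2*k+2 then a (i + ⟨n, h⟩) else one) hb]
    rw [CFSAux.foldProd_last_zero star _ _ k star0r ?_, map_zero]
    show star (if h : 2*k+1 < 2*k+2 then a (i + ⟨2*k+1, h⟩) else one)
          (if h : 2*k+2 < 2*k+2 then a (i + ⟨2*k+2, h⟩) else one)
        - cdot (if h : 2*k+1 < 2*k+2 then a (i + ⟨2*k+1, h⟩) else one)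
          (if h : 2*k+2 < 2*k+2 then a (i + ⟨2*k+2, h⟩) else one) = 0
    rw [dif_neg (by omega : ¬ 2*k+2 < 2*k+2), hstar_one_right, hcdot_one_right, sub_self]
  have hG2 : ∀ n, τ (G (n+2)) = τ (G n) := by
    intro n
    have e1 : G (n+2) = star (CFSAux.foldProd star one (fun i => Θ (n+2+2*i)) k) (Θ n) := by
      simp only [hGdef]
      show star (CFSAux.foldProd star one (fun m => Θ (n+2+2*m)) k) (Θ (n+2+2*k)) = _
      rw [show n+2+2*k = n + (2*k+2) by omega, Th_per]
    have e2 : G n = star (Θ n) (CFSAux.foldProd star one (fun i => Θ (n+2+2*i)) k) := by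
      simp only [hGdef]
      rw [show k+1 = 1+k by omega, CFSAux.foldProd_shift, fp_pull]
      congr 1
      · show star one (Θ (n + 2*0)) = Θ n
        rw [hstar_one_left]
        norm_num
      · apply CFSAux.foldProd_congr
        intro i hi
        congr 1
        omega
    rw [e1, e2]
    exact (hτ_trace _ _).symm
  have hGmod : ∀ n, τ (G (2*n)) = τ (G 0) ∧ τ (G (2*n+1)) = τ (G 1) := by
    intro n
    induction n with
    | zero => norm_num
    | succ n ih =>
        constructor
        · rw [show 2*(n+1) = 2*n+2 by ring, hG2]
          exact ih.1
        · rw [show 2*(n+1)+1 = (2*n+1)+2 by ring, hG2]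
          exact ih.2
  have hk1 : ((k:ℂ)+1) ≠ 0 := Nat.cast_add_one_ne_zero k
  have hB : (∑ i : Fin (2*k+2), (-1:ℂ)^(i:ℕ) *
      (phiCFS (⇑τ) star cdot (k+1) (Fin.cons one (fun j : Fin (2*k+2) => a (i+j)))
        - phiCFS (⇑τ) star cdot (k+1) (Fin.snoc (fun j : Fin (2*k+2) => a (i+j)) one)))
      = ((k:ℂ)+1) * (τ (G 0) - τ (G 1)) := by
    have e0 : ∀ i : Fin (2*k+2), (-1:ℂ)^(i:ℕ) *
        (phiCFS (⇑τ) star cdot (k+1) (Fin.cons one (fun j : Fin (2*k+2) => a (i+j)))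
          - phiCFS (⇑τ) star cdot (k+1) (Fin.snoc (fun j : Fin (2*k+2) => a (i+j)) one))
        = (-1:ℂ)^(i:ℕ) * τ (G (i:ℕ)) := by
      intro i
      rw [hGval i, hsnoc i, sub_zero]
    rw [Finset.sum_congr rfl (fun i _ => e0 i),
      Fin.sum_univ_eq_sum_range (fun n => (-1:ℂ)^n * τ (G n)) (2*k+2),
      show 2*k+2 = 2*(k+1) by ring,
      CFSAux.sum_pair (fun n => (-1:ℂ)^n * τ (G n)) (k+1)]
    have e1 : ∀ j : ℕ, ((-1:ℂ)^(2*j) * τ (G (2*j)) + (-1:ℂ)^(2*j+1) * τ (G (2*j+1)))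
        = τ (G 0) - τ (G 1) := by
      intro j
      rw [(hGmod j).1, (hGmod j).2, pow_succ, pow_mul]
      norm_num
      ring
    rw [Finset.sum_congr rfl (fun j _ => e1 j), Finset.sum_const, Finset.card_range,
      nsmul_eq_mul]
    push_cast
    ring
  -- ===== Part b : the Hochschild coboundary term =====
  set Pi : ℕ → A := fun m => CFSAux.foldProd star (aN 0) (fun i => Θ (2*i+1)) m with hPidef
  set S : ℕ → ℂ := fun m => τ (CFSAux.foldProd star (star (Pi m) (aN (2*m+1)))
      (fun i => Θ (2*m+2+2*i)) (k - m)) with hSdef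
  set F : ℕ → ℂ := fun n => (-1:ℂ)^n *
      phiCFS (⇑τ) star cdot k (hochMul cdot (2*k) ⟨n % (2*k+1), Nat.mod_lt _ (by omega)⟩ a) with hFdef
  set U : ℕ → ℂ := fun t => τ (CFSAux.foldProd star (star (Pi t)
      (star (cdot (aN (2*t+1)) (aN (2*t+2))) (aN (2*t+3))
        - cdot (cdot (aN (2*t+1)) (aN (2*t+2))) (aN (2*t+3))))
      (fun i => Θ (2*t+4+2*i)) (k-1-t)) with hUdef
  set V : ℕ → ℂ := fun t => τ (CFSAux.foldProd star (star (Pi t)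
      (star (aN (2*t+1)) (cdot (aN (2*t+2)) (aN (2*t+3)))
        - cdot (aN (2*t+1)) (cdot (aN (2*t+2)) (aN (2*t+3)))))
      (fun i => Θ (2*t+4+2*i)) (k-1-t)) with hVdef
  have hsgnodd : ∀ t : ℕ, (-1:ℂ)^(2*t+1) = -1 := by
    intro t
    rw [pow_succ, pow_mul]
    norm_num
  have hsgneven : ∀ t : ℕ, (-1:ℂ)^(2*t+2) = 1 := by
    intro t
    rw [pow_succ, pow_succ, pow_mul]
    norm_num
  have hcastS : ∀ i : Fin (2*k+1), a i.castSucc = aN (i:ℕ) := by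
    intro i
    rw [aN_eq (i:ℕ) (by omega)]
    exact congrArg a (Fin.ext rfl)
  have hcastP : ∀ i : Fin (2*k+1), a i.succ = aN ((i:ℕ)+1) := by
    intro i
    rw [aN_eq ((i:ℕ)+1) (by omega)]
    exact congrArg a (Fin.ext rfl)
  -- the Fin-sum as a range-sum
  have hFin : (∑ j : Fin (2*k+1), (-1:ℂ)^(j:ℕ) * phiCFS (⇑τ) star cdot k (hochMul cdot (2*k) j a))
      = ∑ n ∈ Finset.range (2*k+1), F n := by
    have e0 : ∀ j : Fin (2*k+1), (-1:ℂ)^(j:ℕ) * phiCFS (⇑τ) star cdot k (hochMul cdot (2*k) j a)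
        = F (j:ℕ) := by
      intro j
      simp only [hFdef]
      rw [show (⟨(j:ℕ) % (2*k+1), Nat.mod_lt _ (by omega)⟩ : Fin (2*k+1)) = j from
        Fin.ext (Nat.mod_eq_of_lt j.isLt)]
    rw [Finset.sum_congr rfl (fun j _ => e0 j), Fin.sum_univ_eq_sum_range F (2*k+1)]
  -- the j = 0 term
  have hF0 : F 0 = S 0 - τ (G 0) := by
    set b' : ℕ → A := fun n => if n = 0 then cdot (aN 0) (aN 1) else aN (n+1) with hb'
    have hb : ∀ i : Fin (2*k+1),
        hochMul cdot (2*k) (⟨0 % (2*k+1), Nat.mod_lt _ (by omega)⟩ : Fin (2*k+1)) a i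
          = b' (i:ℕ) := by
      intro i
      show (if (i:ℕ) < 0 % (2*k+1) then a i.castSucc
          else if (i:ℕ) = 0 % (2*k+1) then cdot (a i.castSucc) (a i.succ) else a i.succ)
        = b' (i:ℕ)
      simp only [Nat.zero_mod, hb']
      by_cases h : (i:ℕ) = 0
      · simp [h, hcastS i, hcastP i]
      · simp [h, hcastP i]
    simp only [hFdef]
    rw [pow_zero, one_mul, CFSAux.phi_eq (⇑τ) star cdot k _ b' hb]
    have hbase : b' 0 = cdot (aN 0) (aN 1) := by
      simp [hb']
    have hg : ∀ m, m < k →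
        star (b' (2*m+1)) (b' (2*m+2)) - cdot (b' (2*m+1)) (b' (2*m+2)) = Θ (2*m+2) := by
      intro m hm
      have e1 : b' (2*m+1) = aN (2*m+2) := by
        simp only [hb']
        rw [if_neg (by omega)]
      have e2 : b' (2*m+2) = aN (2*m+3) := by
        simp only [hb']
        rw [if_neg (by omega)]
      rw [e1, e2, hThdef]
    have hfold : CFSAux.foldProd star (cdot (aN 0) (aN 1))
        (fun m => star (b' (2*m+1)) (b' (2*m+2)) - cdot (b' (2*m+1)) (b' (2*m+2))) k
        = CFSAux.foldProd star (cdot (aN 0) (aN 1)) (fun m => Θ (2*m+2)) k :=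
      CFSAux.foldProd_congr star _ (fun m hm => hg m hm)
    rw [hbase, hfold]
    have hG0 : G 0 = CFSAux.foldProd star (Θ 0) (fun m => Θ (2*m+2)) k := by
      simp only [hGdef]
      rw [show k+1 = 1+k by omega, CFSAux.foldProd_shift]
      show CFSAux.foldProd star (star one (Θ 0)) (fun i => Θ (0+2*(1+i))) k = _
      rw [hstar_one_left]
      exact CFSAux.foldProd_congr star _ (fun i hi => by congr 1; omega)
    have hS0 : S 0 = τ (CFSAux.foldProd star (star (aN 0) (aN 1)) (fun m => Θ (2*m+2)) k) := by
      simp only [hSdef]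
      show τ (CFSAux.foldProd star (star (aN 0) (aN 1)) (fun i => Θ (2+2*i)) k) = _
      congr 1
      exact CFSAux.foldProd_congr star _ (fun i hi => by congr 1; omega)
    have hsub : CFSAux.foldProd star (Θ 0) (fun m => Θ (2*m+2)) k
        = CFSAux.foldProd star (star (aN 0) (aN 1)) (fun m => Θ (2*m+2)) k
          - CFSAux.foldProd star (cdot (aN 0) (aN 1)) (fun m => Θ (2*m+2)) k :=
      CFSAux.foldProd_sub star starsubl (star (aN 0) (aN 1)) (cdot (aN 0) (aN 1)) _ k
    rw [hS0, hG0, hsub, map_sub]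
    ring
  -- the middle terms
  have hFodd : ∀ t, t < k → F (2*t+1) = - U t := by
    intro t ht
    set b' : ℕ → A := fun n => if n < 2*t+1 then aN n
        else if n = 2*t+1 then cdot (aN (2*t+1)) (aN (2*t+2)) else aN (n+1) with hb'
    have hb : ∀ i : Fin (2*k+1),
        hochMul cdot (2*k) (⟨2*t+1, by omega⟩ : Fin (2*k+1)) a i = b' (i:ℕ) := by
      intro i
      show (if (i:ℕ) < 2*t+1 then a i.castSucc
          else if (i:ℕ) = 2*t+1 then cdot (a i.castSucc) (a i.succ) else a i.succ) = b' (i:ℕ)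
      simp only [hb']
      rcases lt_trichotomy ((i:ℕ)) (2*t+1) with h|h|h
      · rw [if_pos h, if_pos h]
        exact hcastS i
      · rw [if_neg (by omega : ¬ (i:ℕ) < 2*t+1), if_pos h,
          if_neg (by omega : ¬ (i:ℕ) < 2*t+1), if_pos h, hcastS i, hcastP i, h]
      · rw [if_neg (by omega : ¬ (i:ℕ) < 2*t+1), if_neg (by omega : ¬ (i:ℕ) = 2*t+1),
          if_neg (by omega : ¬ (i:ℕ) < 2*t+1), if_neg (by omega : ¬ (i:ℕ) = 2*t+1)]
        exact hcastP i
    simp only [hFdef]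
    rw [hsgnodd t, show (⟨(2*t+1) % (2*k+1), Nat.mod_lt _ (by omega)⟩ : Fin (2*k+1))
        = ⟨2*t+1, by omega⟩ from Fin.ext (Nat.mod_eq_of_lt (by omega)),
      CFSAux.phi_eq (⇑τ) star cdot k _ b' hb]
    have hbase : b' 0 = aN 0 := by
      simp only [hb']
      rw [if_pos (by omega)]
    have h1 : ∀ m, m < t →
        star (b' (2*m+1)) (b' (2*m+2)) - cdot (b' (2*m+1)) (b' (2*m+2)) = Θ (2*m+1) := by
      intro m hm
      have e1 : b' (2*m+1) = aN (2*m+1) := by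
        simp only [hb']
        rw [if_pos (by omega)]
      have e2 : b' (2*m+2) = aN (2*m+2) := by
        simp only [hb']
        rw [if_pos (by omega)]
      rw [e1, e2, hThdef]
    have h2 : star (b' (2*t+1)) (b' (2*t+2)) - cdot (b' (2*t+1)) (b' (2*t+2))
        = star (cdot (aN (2*t+1)) (aN (2*t+2))) (aN (2*t+3))
          - cdot (cdot (aN (2*t+1)) (aN (2*t+2))) (aN (2*t+3)) := by
      have e1 : b' (2*t+1) = cdot (aN (2*t+1)) (aN (2*t+2)) := by
        simp only [hb']
        rw [if_neg (by omega : ¬ 2*t+1 < 2*t+1)]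
        simp
      have e2 : b' (2*t+2) = aN (2*t+3) := by
        simp only [hb']
        rw [if_neg (by omega), if_neg (by omega)]
      rw [e1, e2]
    have h3 : ∀ m, t < m → m < k →
        star (b' (2*m+1)) (b' (2*m+2)) - cdot (b' (2*m+1)) (b' (2*m+2)) = Θ (2*m+2) := by
      intro m hm1 hm2
      have e1 : b' (2*m+1) = aN (2*m+2) := by
        simp only [hb']
        rw [if_neg (by omega), if_neg (by omega)]
      have e2 : b' (2*m+2) = aN (2*m+3) := by
        simp only [hb']
        rw [if_neg (by omega), if_neg (by omega)]
      rw [e1, e2, hThdef]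
    rw [hbase, CFSAux.fold_mid star (aN 0) Θ
      (fun m => star (b' (2*m+1)) (b' (2*m+2)) - cdot (b' (2*m+1)) (b' (2*m+2))) k t ht
      (star (cdot (aN (2*t+1)) (aN (2*t+2))) (aN (2*t+3))
        - cdot (cdot (aN (2*t+1)) (aN (2*t+2))) (aN (2*t+3))) h1 h2 h3]
    simp only [hUdef, hPidef]
    ring
  have hFeven : ∀ t, t < k → F (2*t+2) = V t := by
    intro t ht
    set b' : ℕ → A := fun n => if n < 2*t+2 then aN n
        else if n = 2*t+2 then cdot (aN (2*t+2)) (aN (2*t+3)) else aN (n+1) with hb'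
    have hb : ∀ i : Fin (2*k+1),
        hochMul cdot (2*k) (⟨2*t+2, by omega⟩ : Fin (2*k+1)) a i = b' (i:ℕ) := by
      intro i
      show (if (i:ℕ) < 2*t+2 then a i.castSucc
          else if (i:ℕ) = 2*t+2 then cdot (a i.castSucc) (a i.succ) else a i.succ) = b' (i:ℕ)
      simp only [hb']
      rcases lt_trichotomy ((i:ℕ)) (2*t+2) with h|h|h
      · rw [if_pos h, if_pos h]
        exact hcastS i
      · rw [if_neg (by omega : ¬ (i:ℕ) < 2*t+2), if_pos h,
          if_neg (by omega : ¬ (i:ℕ) < 2*t+2), if_pos h, hcastS i, hcastP i, h]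
      · rw [if_neg (by omega : ¬ (i:ℕ) < 2*t+2), if_neg (by omega : ¬ (i:ℕ) = 2*t+2),
          if_neg (by omega : ¬ (i:ℕ) < 2*t+2), if_neg (by omega : ¬ (i:ℕ) = 2*t+2)]
        exact hcastP i
    simp only [hFdef]
    rw [hsgneven t, one_mul, show (⟨(2*t+2) % (2*k+1), Nat.mod_lt _ (by omega)⟩ : Fin (2*k+1))
        = ⟨2*t+2, by omega⟩ from Fin.ext (Nat.mod_eq_of_lt (by omega)),
      CFSAux.phi_eq (⇑τ) star cdot k _ b' hb]
    have hbase : b' 0 = aN 0 := by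
      simp only [hb']
      rw [if_pos (by omega)]
    have h1 : ∀ m, m < t →
        star (b' (2*m+1)) (b' (2*m+2)) - cdot (b' (2*m+1)) (b' (2*m+2)) = Θ (2*m+1) := by
      intro m hm
      have e1 : b' (2*m+1) = aN (2*m+1) := by
        simp only [hb']
        rw [if_pos (by omega)]
      have e2 : b' (2*m+2) = aN (2*m+2) := by
        simp only [hb']
        rw [if_pos (by omega)]
      rw [e1, e2, hThdef]
    have h2 : star (b' (2*t+1)) (b' (2*t+2)) - cdot (b' (2*t+1)) (b' (2*t+2))
        = star (aN (2*t+1)) (cdot (aN (2*t+2)) (aN (2*t+3)))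
          - cdot (aN (2*t+1)) (cdot (aN (2*t+2)) (aN (2*t+3))) := by
      have e1 : b' (2*t+1) = aN (2*t+1) := by
        simp only [hb']
        rw [if_pos (by omega)]
      have e2 : b' (2*t+2) = cdot (aN (2*t+2)) (aN (2*t+3)) := by
        simp only [hb']
        rw [if_neg (by omega : ¬ 2*t+2 < 2*t+2)]
        simp
      rw [e1, e2]
    have h3 : ∀ m, t < m → m < k →
        star (b' (2*m+1)) (b' (2*m+2)) - cdot (b' (2*m+1)) (b' (2*m+2)) = Θ (2*m+2) := by
      intro m hm1 hm2
      have e1 : b' (2*m+1) = aN (2*m+2) := by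
        simp only [hb']
        rw [if_neg (by omega), if_neg (by omega)]
      have e2 : b' (2*m+2) = aN (2*m+3) := by
        simp only [hb']
        rw [if_neg (by omega), if_neg (by omega)]
      rw [e1, e2, hThdef]
    rw [hbase, CFSAux.fold_mid star (aN 0) Θ
      (fun m => star (b' (2*m+1)) (b' (2*m+2)) - cdot (b' (2*m+1)) (b' (2*m+2))) k t ht
      (star (aN (2*t+1)) (cdot (aN (2*t+2)) (aN (2*t+3)))
        - cdot (aN (2*t+1)) (cdot (aN (2*t+2)) (aN (2*t+3)))) h1 h2 h3]
  -- the key algebraic step : V t - U t = S (t+1) - S t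
  have hUV : ∀ t, t < k → V t - U t = S (t+1) - S t := by
    intro t ht
    have hX : (star (aN (2*t+1)) (cdot (aN (2*t+2)) (aN (2*t+3)))
          - cdot (aN (2*t+1)) (cdot (aN (2*t+2)) (aN (2*t+3))))
        - (star (cdot (aN (2*t+1)) (aN (2*t+2))) (aN (2*t+3))
          - cdot (cdot (aN (2*t+1)) (aN (2*t+2))) (aN (2*t+3)))
        = star (Θ (2*t+1)) (aN (2*t+3)) - star (aN (2*t+1)) (Θ (2*t+2)) := by
      simp only [hThdef]
      rw [show 2*t+1+1 = 2*t+2 from rfl, show 2*t+2+1 = 2*t+3 from rfl,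
        starsubl, starsubr, hstar_assoc, hcdot_assoc]
      abel
    have eS1 : S (t+1) = τ (CFSAux.foldProd star
        (star (Pi t) (star (Θ (2*t+1)) (aN (2*t+3)))) (fun i => Θ (2*t+4+2*i)) (k-1-t)) := by
      simp only [hSdef]
      rw [show Pi (t+1) = star (Pi t) (Θ (2*t+1)) from rfl, hstar_assoc,
        show k - (t+1) = k-1-t by omega]
      rfl
    have eSt : S t = τ (CFSAux.foldProd star
        (star (Pi t) (star (aN (2*t+1)) (Θ (2*t+2)))) (fun i => Θ (2*t+4+2*i)) (k-1-t)) := by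
      simp only [hSdef]
      rw [show k - t = 1 + (k-1-t) by omega, CFSAux.foldProd_shift, hstar_assoc,
        show star (Pi t) (star (aN (2*t+1)) (Θ (2*t+2+2*0)))
          = star (Pi t) (star (aN (2*t+1)) (Θ (2*t+2))) from rfl]
      exact congrArg τ (CFSAux.foldProd_congr star _ (fun i hi => by congr 1; omega))
    rw [hVdef, hUdef, eS1, eSt]
    rw [← map_sub, ← map_sub, ← CFSAux.foldProd_sub star starsubl,
      ← CFSAux.foldProd_sub star starsubl, ← starsubr, ← starsubr, hX]
  -- the wrap-around term
  have hwrap : (-1:ℂ)^(2*k+1) * phiCFS (⇑τ) star cdot k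
      (fun i => if i = 0 then cdot (a (Fin.last (2*k+1))) (a 0) else a i.castSucc)
      = τ (G 1) - S k := by
    set b' : ℕ → A := fun n => if n = 0 then cdot (aN (2*k+1)) (aN 0) else aN n with hb'
    have hb : ∀ i : Fin (2*k+1),
        (if i = 0 then cdot (a (Fin.last (2*k+1))) (a 0) else a i.castSucc) = b' (i:ℕ) := by
      intro i
      simp only [hb']
      by_cases h : i = 0
      · subst h
        rw [if_pos (rfl : (0 : Fin (2*k+1)) = 0),
          if_pos (by simp : ((0 : Fin (2*k+1)) : ℕ) = 0),
          aN_eq (2*k+1) (by omega), aN_eq 0 (by omega)]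
        rfl
      · have hv : ¬ ((i:ℕ) = 0) := fun hv => h (Fin.ext (by simpa using hv))
        rw [if_neg h, if_neg hv]
        exact hcastS i
    rw [CFSAux.phi_eq (⇑τ) star cdot k _ b' hb]
    have hbase : b' 0 = cdot (aN (2*k+1)) (aN 0) := by
      simp [hb']
    have hg : ∀ m, m < k →
        star (b' (2*m+1)) (b' (2*m+2)) - cdot (b' (2*m+1)) (b' (2*m+2)) = Θ (2*m+1) := by
      intro m hm
      have e1 : b' (2*m+1) = aN (2*m+1) := by
        simp only [hb']
        rw [if_neg (by omega)]
      have e2 : b' (2*m+2) = aN (2*m+2) := by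
        simp only [hb']
        rw [if_neg (by omega)]
      rw [e1, e2, hThdef]
    have hfold : CFSAux.foldProd star (cdot (aN (2*k+1)) (aN 0))
        (fun m => star (b' (2*m+1)) (b' (2*m+2)) - cdot (b' (2*m+1)) (b' (2*m+2))) k
        = CFSAux.foldProd star (cdot (aN (2*k+1)) (aN 0)) (fun m => Θ (2*m+1)) k :=
      CFSAux.foldProd_congr star _ (fun m hm => hg m hm)
    rw [hbase, hfold, fp_pull]
    have hG1 : τ (G 1) = τ (star (CFSAux.foldProd star one (fun m => Θ (2*m+1)) k)
          (star (aN (2*k+1)) (aN 0)))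
        - τ (star (CFSAux.foldProd star one (fun m => Θ (2*m+1)) k)
          (cdot (aN (2*k+1)) (aN 0))) := by
      have e1 : G 1 = star (CFSAux.foldProd star one (fun m => Θ (2*m+1)) k) (Θ (2*k+1)) := by
        simp only [hGdef]
        show star (CFSAux.foldProd star one (fun m => Θ (1+2*m)) k) (Θ (1+2*k)) = _
        rw [show 1+2*k = 2*k+1 by omega]
        congr 1
        exact CFSAux.foldProd_congr star _ (fun m hm => by congr 1; omega)
      have e2 : Θ (2*k+1) = star (aN (2*k+1)) (aN 0) - cdot (aN (2*k+1)) (aN 0) := by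
        simp only [hThdef]
        rw [show (2*k+1)+1 = 0 + (2*k+2) by omega, aN_per]
      rw [e1, e2, starsubr, map_sub]
    have hSk : S k = τ (star (CFSAux.foldProd star one (fun m => Θ (2*m+1)) k)
        (star (aN (2*k+1)) (aN 0))) := by
      simp only [hSdef]
      rw [show k - k = 0 from Nat.sub_self k]
      show τ (star (Pi k) (aN (2*k+1))) = _
      simp only [hPidef]
      rw [fp_pull, hτ_trace, ← hstar_assoc, hτ_trace]
    have hLHS : τ (star (cdot (aN (2*k+1)) (aN 0))
          (CFSAux.foldProd star one (fun m => Θ (2*m+1)) k))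
        = τ (star (CFSAux.foldProd star one (fun m => Θ (2*m+1)) k)
          (cdot (aN (2*k+1)) (aN 0))) := hτ_trace _ _
    rw [hLHS, hG1, hSk, hsgnodd k]
    ring
  -- telescoping
  have hsum1 : ∑ n ∈ Finset.range (2*k+1), F n = (S k - S 0) + (S 0 - τ (G 0)) := by
    rw [Finset.sum_range_succ' F (2*k), CFSAux.sum_pair (fun n => F (n+1)) k]
    have e : ∀ t ∈ Finset.range k, F (2*t+1) + F (2*t+1+1) = S (t+1) - S t := by
      intro t htm
      have ht : t < k := Finset.mem_range.mp htm
      rw [show 2*t+1+1 = 2*t+2 from rfl, hFodd t ht, hFeven t ht, ← hUV t ht]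
      ring
    rw [Finset.sum_congr rfl e, Finset.sum_range_sub S k, hF0]
  -- final assembly
  have hdiv : (1 / ((k:ℂ)+1)) * (((k:ℂ)+1) * (τ (G 0) - τ (G 1))) = τ (G 0) - τ (G 1) := by
    rw [one_div, inv_mul_cancel_left₀ hk1]
  rw [hFin, hsum1, hwrap, hB, hdiv]
  ring
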